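/- arXiv:2202.06141 — 2 statements merged into one kernel-verified Lean document; each statement's English description precedes it below -/
import Mathlib

section
/- For all w in the closed l∞-ball B̄_β, the smoothed function satisfies |f_α(w) − f(w)| ≤ α·L₀·√(d/12), where L₀ := E[L₀(ξ)]. -/
open MeasureTheory Filter
open scoped Classical BigOperators

noncomputable section

/-- The closed `l∞`-ball of radius `r` centered at `0` in `ℝ^d`. -/
def Binf (d : ℕ) (r : ℝ) : Set (EuclideanSpace ℝ (Fin d)) := {z | ∀ i, |z i| ≤ r}

/-- The uniform probability distribution on the closed `l∞`-ball of radius `r` in `ℝ^d`. -/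
def unifMeas (d : ℕ) (r : ℝ) : Measure (EuclideanSpace ℝ (Fin d)) :=
  (volume (Binf d r))⁻¹ • volume.restrict (Binf d r)

/-- The point `w + u` with its `i`-th coordinate replaced by `w i + s`. -/
def shiftPt {d : ℕ} (s : ℝ) (w u : EuclideanSpace ℝ (Fin d)) (i : Fin d) :
    EuclideanSpace ℝ (Fin d) :=
  w + u + (s - u i) • EuclideanSpace.single i (1 : ℝ)

/-- The finite difference `df_i(w, u_{∖i})` of a function `f : ℝ^d → ℝ`. -/
def dfFD {d : ℕ} (α : ℝ) (f : EuclideanSpace ℝ (Fin d) → ℝ)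
    (i : Fin d) (w u : EuclideanSpace ℝ (Fin d)) : ℝ :=
  f (shiftPt (α / 2) w u i) - f (shiftPt (-(α / 2)) w u i)

/-- The finite-difference vector `dF(w,u,ξ)` whose `i`-th component is
`F(…, w_i + α/2, …, ξ) − F(…, w_i − α/2, …, ξ)`. -/
def dFvec {d p : ℕ} (α : ℝ)
    (F : EuclideanSpace ℝ (Fin d) → EuclideanSpace ℝ (Fin p) → ℝ)
    (w u : EuclideanSpace ℝ (Fin d)) (ξ : EuclideanSpace ℝ (Fin p)) :
    EuclideanSpace ℝ (Fin d) :=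
  ∑ i : Fin d,
    (F (shiftPt (α / 2) w u i) ξ - F (shiftPt (-(α / 2)) w u i) ξ) • EuclideanSpace.single i (1 : ℝ)

/-- `f(w) := E[F(w,ξ)]`. -/
def fbar {d p : ℕ} (μξ : Measure (EuclideanSpace ℝ (Fin p)))
    (F : EuclideanSpace ℝ (Fin d) → EuclideanSpace ℝ (Fin p) → ℝ)
    (w : EuclideanSpace ℝ (Fin d)) : ℝ := ∫ ξ, F w ξ ∂μξ

/-- The randomized smoothing `f_α(w) := E[f(w+u)]`, `u` uniform on `B̄_{α/2}`. -/
def smoothed {d : ℕ} (α : ℝ) (f : EuclideanSpace ℝ (Fin d) → ℝ)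
    (w : EuclideanSpace ℝ (Fin d)) : ℝ := ∫ u, f (w + u) ∂(unifMeas d (α / 2))

open Set in
lemma binf_eq_preimage (d : ℕ) (r : ℝ) :
    Binf d r = ((MeasurableEquiv.toLp 2 (Fin d → ℝ)).symm) ⁻¹' (Set.univ.pi fun _ : Fin d => Icc (-r) r) := by
  ext z
  simp only [Set.mem_preimage, Set.mem_univ_pi, mem_Icc, Binf, mem_setOf_eq, abs_le]
  rfl

open Set in
lemma binf_measurable (d : ℕ) (r : ℝ) : MeasurableSet (Binf d r) :=
  binf_eq_preimage d r ▸ ((MeasurableEquiv.toLp 2 (Fin d → ℝ)).symm).measurable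
    (MeasurableSet.univ_pi fun _ => measurableSet_Icc)

open Set in
lemma volume_binf (d : ℕ) {r : ℝ} (hr : 0 ≤ r) :
    volume (Binf d r) = (ENNReal.ofReal (2 * r)) ^ d := by
  rw [binf_eq_preimage,
    (EuclideanSpace.volume_preserving_symm_measurableEquiv_toLp (Fin d)).measure_preimage
      ((MeasurableSet.univ_pi fun _ => measurableSet_Icc).nullMeasurableSet),
    volume_pi_pi]
  simp [Real.volume_Icc]
  ring_nf
  simp [ENNReal.ofReal_mul' (show (0:ℝ) ≤ 2 by norm_num), mul_pow]

open Set in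
def nu (r : ℝ) : Measure ℝ := (ENNReal.ofReal (2 * r))⁻¹ • volume.restrict (Icc (-r) r)

open Set in
lemma nu_prob {r : ℝ} (hr : 0 < r) : IsProbabilityMeasure (nu r) := by
  constructor
  simp only [nu, Measure.smul_apply, Measure.restrict_apply_univ, Real.volume_Icc, smul_eq_mul]
  rw [show r - -r = 2 * r by ring, ENNReal.inv_mul_cancel]
  · simp [hr]
  · exact ENNReal.ofReal_ne_top

open Set in
lemma map_unifMeas (d : ℕ) {r : ℝ} (hr : 0 < r) :
    Measure.map ((MeasurableEquiv.toLp 2 (Fin d → ℝ)).symm) (unifMeas d r)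
      = Measure.pi (fun _ : Fin d => nu r) := by
  have hS := binf_measurable d r
  haveI := nu_prob hr
  refine Eq.symm (Measure.pi_eq fun s hs => ?_)
  rw [Measure.map_apply ((MeasurableEquiv.toLp 2 (Fin d → ℝ)).symm).measurable
    (MeasurableSet.univ_pi hs)]
  have hinter : ((MeasurableEquiv.toLp 2 (Fin d → ℝ)).symm) ⁻¹' (Set.univ.pi s) ∩ Binf d r
      = ((MeasurableEquiv.toLp 2 (Fin d → ℝ)).symm) ⁻¹' (Set.univ.pi fun i => s i ∩ Icc (-r) r) := by
    rw [binf_eq_preimage, ← Set.preimage_inter, ← Set.pi_inter_distrib]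
  have hvol : volume (((MeasurableEquiv.toLp 2 (Fin d → ℝ)).symm) ⁻¹' (Set.univ.pi s) ∩ Binf d r)
      = ∏ i, volume (s i ∩ Icc (-r) r) := by
    rw [hinter,
      (EuclideanSpace.volume_preserving_symm_measurableEquiv_toLp (Fin d)).measure_preimage
        ((MeasurableSet.univ_pi fun i => (hs i).inter measurableSet_Icc).nullMeasurableSet),
      volume_pi_pi]
  simp only [unifMeas, Measure.smul_apply, Measure.restrict_apply
    (((MeasurableEquiv.toLp 2 (Fin d → ℝ)).symm).measurable (MeasurableSet.univ_pi hs)),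
    hvol, volume_binf d hr.le, smul_eq_mul, nu]
  rw [Finset.prod_mul_distrib, Finset.prod_const, ← ENNReal.inv_pow]
  congr 1
  · simp
  · refine Finset.prod_congr rfl fun i _ => ?_
    rw [Measure.restrict_apply (hs i)]

open Set in
lemma integral_pi_eval {d : ℕ} (ν : Measure ℝ) [IsProbabilityMeasure ν] (g : ℝ → ℝ)
    (hg : Integrable g ν) (i : Fin d) :
    Integrable (fun x : Fin d → ℝ => g (x i)) (Measure.pi fun _ => ν) ∧
      ∫ x : Fin d → ℝ, g (x i) ∂(Measure.pi fun _ => ν) = ∫ t, g t ∂ν := by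
  letI : MeasureSpace ℝ := ⟨ν⟩
  have hpi : (Measure.pi fun _ : Fin d => ν) = (volume : Measure (Fin d → ℝ)) :=
    (volume_pi).symm
  classical
  set f : Fin d → ℝ → ℝ := fun j => if j = i then g else fun _ => (1:ℝ) with hf
  have key : ∀ x : Fin d → ℝ, g (x i) = ∏ j, f j (x j) := by
    intro x
    rw [Finset.prod_eq_single i (fun j _ hj => by simp [hf, hj]) (by simp)]
    simp [hf]
  have hint : ∀ j, Integrable (f j) (volume : Measure ℝ) := by
    intro j
    by_cases hj : j = i
    · simp only [hf, hj, if_true]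
      exact hg
    · simpa [hf, hj] using (integrable_const (1:ℝ) (μ := ν))
  constructor
  · rw [hpi]
    simp_rw [key]
    exact MeasureTheory.Integrable.fintype_prod hint
  · rw [hpi]
    simp_rw [key]
    rw [MeasureTheory.integral_fintype_prod_volume_eq_prod (𝕜 := ℝ) f,
      Finset.prod_eq_single i (fun j _ hj => by simp [hf, hj]) (by simp)]
    simp [hf]
    rfl

open Set in
lemma nu_ae_mem {r : ℝ} : ∀ᵐ x ∂(nu r), x ∈ Icc (-r) r := by
  unfold nu
  exact Measure.ae_smul_measure (ae_restrict_mem measurableSet_Icc) _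

open Set in
lemma nu_sq_integrable {r : ℝ} (hr : 0 < r) : Integrable (fun x : ℝ => x ^ 2) (nu r) := by
  haveI := nu_prob hr
  refine Integrable.mono' (integrable_const (r ^ 2)) (by fun_prop) ?_
  filter_upwards [nu_ae_mem] with x hx
  rw [Real.norm_eq_abs, abs_pow]
  exact pow_le_pow_left₀ (abs_nonneg x) (abs_le.mpr ⟨hx.1, hx.2⟩) 2

open Set in
lemma nu_sq_integral {r : ℝ} (hr : 0 < r) : ∫ x, x ^ 2 ∂(nu r) = r ^ 2 / 3 := by
  unfold nu
  rw [integral_smul_measure, MeasureTheory.integral_Icc_eq_integral_Ioc,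
    ← intervalIntegral.integral_of_le (by linarith), integral_pow]
  have h2r : (0:ℝ) < 2 * r := by linarith
  rw [ENNReal.toReal_inv, ENNReal.toReal_ofReal h2r.le]
  have hr0 : r ≠ 0 := hr.ne'
  field_simp
  ring_nf
  rw [show r ^ 3 = r ^ 2 * r by ring, mul_inv_cancel_right₀ hr0]

open Set in
lemma unifMeas_prob (d : ℕ) {r : ℝ} (hr : 0 < r) : IsProbabilityMeasure (unifMeas d r) := by
  haveI := nu_prob hr
  constructor
  have := congrArg (fun μ : Measure (Fin d → ℝ) => μ Set.univ) (map_unifMeas d hr)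
  simpa [Measure.map_apply ((MeasurableEquiv.toLp 2 (Fin d → ℝ)).symm).measurable
    MeasurableSet.univ] using this

open Set in
lemma unifMeas_ae_mem (d : ℕ) (r : ℝ) : ∀ᵐ u ∂(unifMeas d r), u ∈ Binf d r := by
  unfold unifMeas
  exact Measure.ae_smul_measure (ae_restrict_mem (binf_measurable d r)) _

open Set in
lemma norm_le_of_mem_binf {d : ℕ} {r : ℝ} (hr : 0 ≤ r) {u : EuclideanSpace ℝ (Fin d)}
    (hu : u ∈ Binf d r) : ‖u‖ ≤ r * Real.sqrt d := by
  rw [EuclideanSpace.norm_eq]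
  simp only [Real.norm_eq_abs, sq_abs]
  have : ∑ i, u i ^ 2 ≤ ∑ _i : Fin d, r ^ 2 := by
    refine Finset.sum_le_sum fun i _ => ?_
    rw [← sq_abs]
    exact pow_le_pow_left₀ (abs_nonneg _) (hu i) 2
  calc Real.sqrt (∑ i, u i ^ 2) ≤ Real.sqrt (∑ _i : Fin d, r ^ 2) := Real.sqrt_le_sqrt this
    _ = r * Real.sqrt d := by
        rw [Finset.sum_const, Finset.card_univ, Fintype.card_fin, nsmul_eq_mul,
          Real.sqrt_mul (by positivity), Real.sqrt_sq hr, mul_comm]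

open Set in
lemma unifMeas_norm_sq (d : ℕ) {r : ℝ} (hr : 0 < r) :
    ∫ u, ‖u‖ ^ 2 ∂(unifMeas d r) = d * r ^ 2 / 3 := by
  haveI := nu_prob hr
  have hnorm : ∀ u : EuclideanSpace ℝ (Fin d),
      ‖u‖ ^ 2 = ∑ i, (((MeasurableEquiv.toLp 2 (Fin d → ℝ)).symm) u i) ^ 2 := by
    intro u
    rw [EuclideanSpace.norm_eq, Real.sq_sqrt (by positivity)]
    simp only [Real.norm_eq_abs, sq_abs]
    rfl
  simp_rw [hnorm]
  have hmap := integral_map_equiv (μ := unifMeas d r) ((MeasurableEquiv.toLp 2 (Fin d → ℝ)).symm)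
    (fun x : Fin d → ℝ => ∑ i, (x i) ^ 2)
  rw [map_unifMeas d hr] at hmap
  rw [← hmap]
  rw [integral_finset_sum _ fun i _ => (integral_pi_eval (nu r) _ (nu_sq_integrable hr) i).1]
  have : ∀ i : Fin d, (∫ x : Fin d → ℝ, (x i) ^ 2 ∂(Measure.pi fun _ => nu r)) = r ^ 2 / 3 :=
    fun i => ((integral_pi_eval (nu r) _ (nu_sq_integrable hr) i).2).trans (nu_sq_integral hr)
  simp_rw [this, Finset.sum_const, Finset.card_univ, Fintype.card_fin, nsmul_eq_mul]
  ring

open Set in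
lemma unifMeas_norm_le (d : ℕ) {r : ℝ} (hr : 0 < r) :
    ∫ u, ‖u‖ ∂(unifMeas d r) ≤ Real.sqrt (d * r ^ 2 / 3) := by
  haveI := unifMeas_prob d hr
  have hmem : MemLp (fun u : EuclideanSpace ℝ (Fin d) => ‖u‖) 2 (unifMeas d r) := by
    refine MemLp.of_bound continuous_norm.aestronglyMeasurable (r * Real.sqrt d) ?_
    filter_upwards [unifMeas_ae_mem d r] with u hu
    rw [norm_norm]
    exact norm_le_of_mem_binf hr.le hu
  have hvar := ProbabilityTheory.variance_nonneg (fun u => ‖u‖) (unifMeas d r)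
  rw [ProbabilityTheory.variance_eq_sub hmem] at hvar
  have h2 : ∫ x, ((fun u : EuclideanSpace ℝ (Fin d) => ‖u‖) ^ 2) x ∂(unifMeas d r)
      = ∫ u, ‖u‖ ^ 2 ∂(unifMeas d r) := by
    refine integral_congr_ae (Filter.Eventually.of_forall fun u => ?_)
    simp
  rw [h2] at hvar
  rw [← unifMeas_norm_sq d hr]
  exact Real.le_sqrt_of_sq_le (by linarith)

open Set in
lemma unifMeas_norm_integrable (d : ℕ) {r : ℝ} (hr : 0 < r) :
    Integrable (fun u : EuclideanSpace ℝ (Fin d) => ‖u‖) (unifMeas d r) := by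
  haveI := unifMeas_prob d hr
  refine Integrable.mono' (integrable_const (r * Real.sqrt d))
    continuous_norm.aestronglyMeasurable ?_
  filter_upwards [unifMeas_ae_mem d r] with u hu
  rw [norm_norm]
  exact norm_le_of_mem_binf hr.le hu

open Set in
lemma fbar_like_continuousOn {d : ℕ} {κ C : ℝ} {g : EuclideanSpace ℝ (Fin d) → ℝ}
    (hC : 0 ≤ C)
    (key : ∀ w1 ∈ Binf d κ, ∀ w2 ∈ Binf d κ, |g w1 - g w2| ≤ C * ‖w1 - w2‖) :
    ContinuousOn g (Binf d κ) := by
  refine LipschitzOnWith.continuousOn (K := Real.toNNReal C) ?_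
  rw [lipschitzOnWith_iff_dist_le_mul]
  intro x hx y hy
  rw [Real.dist_eq, dist_eq_norm]
  simpa [Real.coe_toNNReal _ hC] using key x hx y hy


/-- For all `w ∈ B̄_β`, `|f_α(w) − f(w)| ≤ α·L₀·√(d/12)`, where `L₀ := E[L₀(ξ)]`. -/
theorem smoothed_approximation_error
    (d p : ℕ) (α β κ : ℝ) (hα : 0 < α) (hβ : 0 < β) (hκ : β + α / 2 < κ)
    (μξ : Measure (EuclideanSpace ℝ (Fin p))) [IsProbabilityMeasure μξ]
    (F : EuclideanSpace ℝ (Fin d) → EuclideanSpace ℝ (Fin p) → ℝ)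
    (hFmeas : Measurable (Function.uncurry F))
    (hFcont : ∀ ξ, ContinuousOn (fun w => F w ξ) (Binf d κ))
    (L0 : EuclideanSpace ℝ (Fin p) → ℝ) (hL0meas : Measurable L0)
    (hL0sq : Integrable (fun ξ => (L0 ξ) ^ 2) μξ)
    (hlip : ∀ᵐ ξ ∂μξ, ∀ w ∈ Binf d κ, ∀ w' ∈ Binf d κ,
      |F w ξ - F w' ξ| ≤ L0 ξ * ‖w - w'‖)
    (hFint : ∀ w ∈ Binf d κ, Integrable (fun ξ => F w ξ) μξ)
    :
    ∀ w ∈ Binf d β,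
      |smoothed α (fbar μξ F) w - fbar μξ F w| ≤ α * (∫ ξ, L0 ξ ∂μξ) * Real.sqrt (d / 12) := by
  intro w hw
  have hr : (0:ℝ) < α / 2 := by linarith
  haveI hprob := unifMeas_prob d hr
  set C := ∫ ξ, L0 ξ ∂μξ with hCdef
  by_cases hd : d = 0
  · subst hd
    haveI : Subsingleton (EuclideanSpace ℝ (Fin 0)) :=
      ⟨fun a b => by ext i; exact i.elim0⟩
    have hsm : smoothed α (fbar μξ F) w = fbar μξ F w := by
      unfold smoothed
      have hcw : ∀ u : EuclideanSpace ℝ (Fin 0), w + u = w := fun u => Subsingleton.elim _ _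
      simp_rw [hcw]
      simp
    rw [hsm, sub_self, abs_zero]
    have : ((0:ℕ) : ℝ) / 12 = 0 := by norm_num
    rw [this, Real.sqrt_zero, mul_zero]
  · have hd1 : 0 < d := Nat.pos_of_ne_zero hd
    have hκpos : 0 < κ := by linarith
    have hL0int : Integrable L0 μξ :=
      ((memLp_two_iff_integrable_sq hL0meas.aestronglyMeasurable).mpr hL0sq).integrable one_le_two
    set i0 : Fin d := ⟨0, hd1⟩
    have hsingle : EuclideanSpace.single i0 κ ∈ Binf d κ := by
      intro i
      rw [EuclideanSpace.single_apply]
      split <;> simp [abs_of_pos hκpos, hκpos.le]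
    have h0mem : (0 : EuclideanSpace ℝ (Fin d)) ∈ Binf d κ := by
      intro i
      show |(0 : ℝ)| ≤ κ
      simp [hκpos.le]
    have hL0nonneg : ∀ᵐ ξ ∂μξ, 0 ≤ L0 ξ := by
      filter_upwards [hlip] with ξ h
      have h1 := h _ hsingle _ h0mem
      rw [sub_zero, EuclideanSpace.norm_single, Real.norm_eq_abs, abs_of_pos hκpos] at h1
      nlinarith [abs_nonneg (F (EuclideanSpace.single i0 κ) ξ - F 0 ξ)]
    have hC : 0 ≤ C := integral_nonneg_of_ae hL0nonneg
    have hwκ : w ∈ Binf d κ := fun i => le_trans (hw i) (by linarith)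
    have hadd : ∀ u ∈ Binf d (α / 2), w + u ∈ Binf d κ := by
      intro u hu i
      have h1 : |w i + u i| ≤ |w i| + |u i| := abs_add_le _ _
      have := hw i; have := hu i
      show |w i + u i| ≤ κ
      linarith
    have key : ∀ w1 ∈ Binf d κ, ∀ w2 ∈ Binf d κ,
        |fbar μξ F w1 - fbar μξ F w2| ≤ C * ‖w1 - w2‖ := by
      intro w1 h1 w2 h2
      unfold fbar
      rw [← integral_sub (hFint w1 h1) (hFint w2 h2)]
      have step1 : |∫ ξ, (F w1 ξ - F w2 ξ) ∂μξ| ≤ ∫ ξ, |F w1 ξ - F w2 ξ| ∂μξ := by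
        simpa [Real.norm_eq_abs] using
          norm_integral_le_integral_norm (fun ξ => F w1 ξ - F w2 ξ) (μ := μξ)
      refine step1.trans ?_
      have step2 : ∫ ξ, |F w1 ξ - F w2 ξ| ∂μξ ≤ ∫ ξ, L0 ξ * ‖w1 - w2‖ ∂μξ := by
        refine integral_mono_ae ((hFint w1 h1).sub (hFint w2 h2)).abs
          (hL0int.mul_const _) ?_
        filter_upwards [hlip] with ξ h using h w1 h1 w2 h2
      refine step2.trans_eq ?_
      rw [integral_mul_const]
    have haeS := unifMeas_ae_mem d (α / 2)
    have hptwise : ∀ᵐ u ∂(unifMeas d (α / 2)),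
        |fbar μξ F (w + u) - fbar μξ F w| ≤ C * ‖u‖ := by
      filter_upwards [haeS] with u hu
      have := key _ (hadd u hu) _ hwκ
      simpa [add_sub_cancel_left] using this
    have hg1meas : AEStronglyMeasurable (fun u => fbar μξ F (w + u)) (unifMeas d (α / 2)) := by
      have hcont : ContinuousOn (fun u => fbar μξ F (w + u)) (Binf d (α / 2)) :=
        (fbar_like_continuousOn hC key).comp
          ((continuous_const.add continuous_id).continuousOn) (fun u hu => hadd u hu)
      have h1 := hcont.aestronglyMeasurable (μ := volume) (binf_measurable d (α / 2))
      unfold unifMeas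
      exact h1.smul_measure _
    have hg1int : Integrable (fun u => fbar μξ F (w + u)) (unifMeas d (α / 2)) := by
      refine Integrable.mono'
        (integrable_const (|fbar μξ F w| + C * ((α / 2) * Real.sqrt d))) hg1meas ?_
      filter_upwards [hptwise, haeS] with u h1 h2
      rw [Real.norm_eq_abs]
      have hb : ‖u‖ ≤ (α / 2) * Real.sqrt d := norm_le_of_mem_binf hr.le h2
      have hb2 : C * ‖u‖ ≤ C * ((α / 2) * Real.sqrt d) := mul_le_mul_of_nonneg_left hb hC
      have habs : |fbar μξ F (w + u)| ≤ |fbar μξ F w| + |fbar μξ F (w + u) - fbar μξ F w| := by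
        have := abs_add_le (fbar μξ F w) (fbar μξ F (w + u) - fbar μξ F w)
        simpa using this
      linarith
    have hnormint := unifMeas_norm_integrable d hr
    have hchain : |smoothed α (fbar μξ F) w - fbar μξ F w|
        = |∫ u, (fbar μξ F (w + u) - fbar μξ F w) ∂(unifMeas d (α / 2))| := by
      unfold smoothed
      rw [integral_sub hg1int (integrable_const _), integral_const]
      simp
    rw [hchain]
    have hstep1 : |∫ u, (fbar μξ F (w + u) - fbar μξ F w) ∂(unifMeas d (α / 2))|
        ≤ ∫ u, |fbar μξ F (w + u) - fbar μξ F w| ∂(unifMeas d (α / 2)) := by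
      simpa [Real.norm_eq_abs] using norm_integral_le_integral_norm
        (fun u => fbar μξ F (w + u) - fbar μξ F w) (μ := unifMeas d (α / 2))
    have hstep2 : ∫ u, |fbar μξ F (w + u) - fbar μξ F w| ∂(unifMeas d (α / 2))
        ≤ ∫ u, C * ‖u‖ ∂(unifMeas d (α / 2)) :=
      integral_mono_ae (hg1int.sub (integrable_const _)).abs (hnormint.const_mul C) hptwise
    have hstep3 : ∫ u, C * ‖u‖ ∂(unifMeas d (α / 2))
        = C * ∫ u, ‖u‖ ∂(unifMeas d (α / 2)) := integral_const_mul C _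
    have hstep4 : C * ∫ u, ‖u‖ ∂(unifMeas d (α / 2))
        ≤ C * Real.sqrt (d * (α / 2) ^ 2 / 3) :=
      mul_le_mul_of_nonneg_left (unifMeas_norm_le d hr) hC
    have hfin : C * Real.sqrt (d * (α / 2) ^ 2 / 3) = α * C * Real.sqrt (d / 12) := by
      have h1 : (d : ℝ) * (α / 2) ^ 2 / 3 = α ^ 2 * ((d : ℝ) / 12) := by ring
      rw [h1, Real.sqrt_mul (sq_nonneg α), Real.sqrt_sq hα.le]
      ring
    linarith [hstep1, hstep2, hstep3.le, hstep4, hfin.le]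
end
end

section
/- For any w ∈ ℝ^d, let Z* be the set of optimal solutions of the 0-1 knapsack problem: maximize Σ_{i=1}^n z_i ‖w^i‖₂² over z ∈ {0,1}^n subject to Σ_{i=1}^n z_i p_i ≤ m. Then the set of Euclidean projections of w onto C equals { x ∈ ℝ^d : there exists z* ∈ Z* such that for all i ∈ {1,…,n}, x^i = w^i if z*_i = 1 and x^i = 0 if z*_i = 0 }. -/
open MeasureTheory Filter
open scoped Classical BigOperators

noncomputable section

/-- The weighted group `l0`-norm constraint set
`C := {w : Σ_i p_i · 1_{w^i ≠ 0}(w) ≤ m}`, where the partition of coordinates into `n` blocks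
is encoded by `blk : Fin d → Fin n` (coordinate `j` belongs to block `blk j`). -/
def groupC (d n : ℕ) (blk : Fin d → Fin n) (p : Fin n → ℝ) (m : ℝ) :
    Set (EuclideanSpace ℝ (Fin d)) :=
  {w | (∑ i : Fin n, if ∃ j, blk j = i ∧ w j ≠ 0 then p i else 0) ≤ m}

/-- The objective value `Σ_i z_i ‖w^i‖₂²` of the 0-1 knapsack problem associated with
projecting `w` onto `C`. -/
def knapObj {d n : ℕ} (blk : Fin d → Fin n)
    (w : EuclideanSpace ℝ (Fin d)) (z : Fin n → Bool) : ℝ :=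
  ∑ i : Fin n, if z i then (∑ j ∈ Finset.univ.filter (fun j => blk j = i), (w j) ^ 2) else 0

lemma knap_eq {d n : ℕ} (blk : Fin d → Fin n) (w : EuclideanSpace ℝ (Fin d))
    (z : Fin n → Bool) :
    knapObj blk w z = ∑ j : Fin d, if z (blk j) then (w j)^2 else 0 := by
  unfold knapObj
  rw [← Finset.sum_fiberwise Finset.univ blk (fun j => if z (blk j) then (w j)^2 else 0)]
  refine Finset.sum_congr rfl fun i _ => ?_
  by_cases h : z i
  · rw [if_pos h]
    refine Finset.sum_congr rfl fun j hj => ?_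
    rw [Finset.mem_filter] at hj
    rw [hj.2, if_pos h]
  · rw [if_neg h]
    refine (Finset.sum_eq_zero fun j hj => ?_).symm
    rw [Finset.mem_filter] at hj
    rw [hj.2, if_neg h]

lemma normsq {d : ℕ} (v : EuclideanSpace ℝ (Fin d)) :
    ‖v‖^2 = ∑ j, (v j)^2 := by
  rw [EuclideanSpace.norm_eq, Real.sq_sqrt (by positivity)]
  simp [sq_abs]

/-- The set of Euclidean projections of `w` onto `C` equals the set of points
`x` obtained from some optimal solution `z*` of the 0-1 knapsack problem
`max Σ z_i ‖w^i‖₂²  s.t. Σ z_i p_i ≤ m` by setting, blockwise, `x^i = w^i` when `z*_i = 1`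
and `x^i = 0` when `z*_i = 0`. -/
theorem projection_onto_C
    (d n : ℕ) (blk : Fin d → Fin n) (hblk : Function.Surjective blk)
    (p : Fin n → ℝ) (hp : ∀ i, 0 < p i) (m : ℝ) (hm : 0 < m)
    (w : EuclideanSpace ℝ (Fin d)) :
    {x : EuclideanSpace ℝ (Fin d) |
        x ∈ groupC d n blk p m ∧
        ∀ y ∈ groupC d n blk p m, ‖w - x‖ ≤ ‖w - y‖}
      = {x : EuclideanSpace ℝ (Fin d) |
          ∃ z : Fin n → Bool,
            ((∑ i : Fin n, if z i then p i else 0) ≤ m ∧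
              ∀ z' : Fin n → Bool, (∑ i : Fin n, if z' i then p i else 0) ≤ m →
                knapObj blk w z' ≤ knapObj blk w z) ∧
            ∀ j : Fin d, x j = if z (blk j) then w j else 0} := by
  have hdist : ∀ y : EuclideanSpace ℝ (Fin d),
      ‖w - y‖^2 = ∑ j, (w j - y j)^2 := fun y => normsq (w - y)
  have hsq : ∀ a b : EuclideanSpace ℝ (Fin d),
      ‖w - a‖ ≤ ‖w - b‖ ↔ ∑ j, (w j - a j)^2 ≤ ∑ j, (w j - b j)^2 := by
    intro a b
    rw [← hdist a, ← hdist b]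
    exact (pow_le_pow_iff_left₀ (norm_nonneg _) (norm_nonneg _) two_ne_zero).symm
  set T : ℝ := ∑ j : Fin d, (w j)^2 with hT
  -- the point built from z
  have hxz : ∀ z : Fin n → Bool,
      ∑ j, (w j - (if z (blk j) then w j else 0))^2 = T - knapObj blk w z := by
    intro z
    rw [knap_eq, hT, ← Finset.sum_sub_distrib]
    refine Finset.sum_congr rfl fun j _ => ?_
    by_cases h : z (blk j) <;> simp [h] <;> ring
  -- membership of xz in C given feasibility
  have hxzC : ∀ z : Fin n → Bool, (∑ i : Fin n, if z i then p i else 0) ≤ m →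
      (WithLp.toLp 2 (fun j => if z (blk j) then w j else 0) : EuclideanSpace ℝ (Fin d)) ∈
        groupC d n blk p m := by
    intro z hz
    refine le_trans (Finset.sum_le_sum fun i _ => ?_) hz
    by_cases h : ∃ j, blk j = i ∧ (if z (blk j) then w j else 0) ≠ 0
    · rw [if_pos h]
      obtain ⟨j, hji, hj0⟩ := h
      have : z i = true := by
        by_contra hzi
        simp only [Bool.not_eq_true] at hzi
        rw [hji] at hj0
        simp [hzi] at hj0
      rw [if_pos this]
    · rw [if_neg h]
      by_cases h2 : z i <;> simp [h2, (hp i).le]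
  -- the support pattern of y
  have hzy_feas : ∀ y : EuclideanSpace ℝ (Fin d), y ∈ groupC d n blk p m →
      (∑ i : Fin n, if (decide (∃ j, blk j = i ∧ y j ≠ 0) : Bool) then p i else 0) ≤ m := by
    intro y hy
    refine le_of_eq_of_le (Finset.sum_congr rfl fun i _ => ?_) hy
    simp [decide_eq_true_eq]
  have hlb : ∀ y : EuclideanSpace ℝ (Fin d),
      T - knapObj blk w (fun i => decide (∃ j, blk j = i ∧ y j ≠ 0)) ≤
        ∑ j, (w j - y j)^2 := by
    intro y
    rw [knap_eq, hT, ← Finset.sum_sub_distrib]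
    refine Finset.sum_le_sum fun j _ => ?_
    by_cases h : ∃ j', blk j' = blk j ∧ y j' ≠ 0
    · simp only [h, decide_eq_true_eq, if_pos]
      have : (0:ℝ) ≤ (w j - y j)^2 := sq_nonneg _
      simp [h]
      positivity
    · have hy0 : y j = 0 := by
        by_contra hy0
        exact h ⟨j, rfl, hy0⟩
      simp [h, hy0]
  ext x
  simp only [Set.mem_setOf_eq]
  constructor
  · rintro ⟨hxC, hxmin⟩
    set z : Fin n → Bool := fun i => decide (∃ j, blk j = i ∧ x j ≠ 0) with hzdef
    have hzfeas : (∑ i : Fin n, if z i then p i else 0) ≤ m := hzy_feas x hxC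
    -- z is false ⇒ coordinate is 0
    have hzero : ∀ j : Fin d, z (blk j) = false → x j = 0 := by
      intro j hj
      by_contra hx0
      have : z (blk j) = true := by
        rw [hzdef]; simp only [decide_eq_true_eq]
        exact ⟨j, rfl, hx0⟩
      rw [this] at hj; exact absurd hj (by simp)
    -- optimality of z
    have hopt : ∀ z' : Fin n → Bool, (∑ i : Fin n, if z' i then p i else 0) ≤ m →
        knapObj blk w z' ≤ knapObj blk w z := by
      intro z' hz'
      have hyC := hxzC z' hz'
      have h1 := (hsq x _).mp (hxmin _ hyC)
      rw [hxz z'] at h1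
      have h2 := hlb x
      linarith
    refine ⟨z, ⟨hzfeas, hopt⟩, ?_⟩
    -- the coordinates agree
    have hyC := hxzC z hzfeas
    have h1 := (hsq x _).mp (hxmin _ hyC)
    rw [hxz z] at h1
    -- decompose the distance of x
    have hdec : ∑ j, (w j - x j)^2
        = (T - knapObj blk w z) + ∑ j, (if z (blk j) then (w j - x j)^2 else 0) := by
      rw [knap_eq, hT, ← Finset.sum_sub_distrib, ← Finset.sum_add_distrib]
      refine Finset.sum_congr rfl fun j _ => ?_
      by_cases h : z (blk j)
      · simp [h]
      · rw [hzero j (by simpa using h)]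
        simp [h]
    have hsum0 : ∑ j, (if z (blk j) then (w j - x j)^2 else 0) ≤ 0 := by
      rw [hdec] at h1; linarith
    have hterm : ∀ j : Fin d, (if z (blk j) then (w j - x j)^2 else 0) = 0 := by
      intro j
      have hge : (0:ℝ) ≤ ∑ j, (if z (blk j) then (w j - x j)^2 else 0) :=
        Finset.sum_nonneg fun j _ => by positivity
      have heq0 : ∑ j, (if z (blk j) then (w j - x j)^2 else 0) = 0 :=
        le_antisymm hsum0 hge
      have := (Finset.sum_eq_zero_iff_of_nonneg
        (fun j (_ : j ∈ Finset.univ) => (by positivity :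
          (0:ℝ) ≤ if z (blk j) then (w j - x j)^2 else 0))).mp heq0
      exact this j (Finset.mem_univ j)
    intro j
    by_cases h : z (blk j)
    · have := hterm j
      rw [if_pos h] at this ⊢
      have : w j - x j = 0 := by
        have := sq_eq_zero_iff.mp this
        exact this
      linarith
    · rw [if_neg h]
      exact hzero j (by simpa using h)
  · rintro ⟨z, ⟨hzfeas, hopt⟩, hx⟩
    have hxeq : x = (WithLp.toLp 2 (fun j => if z (blk j) then w j else 0) : EuclideanSpace ℝ (Fin d)) := by
      ext j; exact hx j
    constructor
    · rw [hxeq]; exact hxzC z hzfeas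
    · intro y hy
      rw [hsq]
      have h1 : ∑ j, (w j - x j)^2 = T - knapObj blk w z := by
        rw [hxeq]; exact hxz z
      have h2 := hlb y
      have h3 := hopt _ (hzy_feas y hy)
      linarith
end
end
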